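/- Suppose K ranks with extended binary labels y_n^(k) = 1{y_n > k}, and the loss L(W, b) = −Σ_{n=1}^N Σ_{k=1}^{K−1} λ^(k) [ y_n^(k) log σ(g_n(W) + b_k) + (1 − y_n^(k)) log(1 − σ(g_n(W) + b_k)) ] with all λ^(k) > 0. Assume that for every pair of adjacent tasks k, k+1 there exists an example n with y_n = k+1 (so y_n^(k) = 1 and y_n^(k+1) = 0). Then any minimizer (W*, b*) of L satisfies b*₁ ≥ b*₂ ≥ ... ≥ b*_{K−1}. -/

import Mathlib

noncomputable def sigmoid (z : ℝ) : ℝ := 1 / (1 + Real.exp (-z))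

noncomputable def coralLoss {W : Type} (N m : ℕ) (g : W → Fin N → ℝ)
    (lam : Fin m → ℝ) (y : Fin N → ℕ) (w : W) (b : Fin m → ℝ) : ℝ :=
  -∑ n, ∑ k, lam k *
    ((if (k : ℕ) + 1 < y n then (1 : ℝ) else 0) * Real.log (sigmoid (g w n + b k)) +
      (1 - (if (k : ℕ) + 1 < y n then (1 : ℝ) else 0)) * Real.log (1 - sigmoid (g w n + b k)))

lemma sigmoid_pos (z : ℝ) : 0 < sigmoid z := by
  unfold sigmoid; positivity

lemma one_sub_sigmoid (z : ℝ) : 1 - sigmoid z = Real.exp (-z) * sigmoid z := by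
  unfold sigmoid
  have h : (1 : ℝ) + Real.exp (-z) ≠ 0 := by positivity
  field_simp
  ring

lemma log_one_sub_sigmoid (z : ℝ) :
    Real.log (1 - sigmoid z) = -z + Real.log (sigmoid z) := by
  rw [one_sub_sigmoid, Real.log_mul (Real.exp_ne_zero _) (ne_of_gt (sigmoid_pos z)),
    Real.log_exp]

theorem ordered_bias_units {W : Type} (N m : ℕ) (g : W → Fin N → ℝ)
    (lam : Fin m → ℝ) (hlam : ∀ k, 0 < lam k)
    (y : Fin N → ℕ) (hy1 : ∀ n, 1 ≤ y n) (hy2 : ∀ n, y n ≤ m + 1)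
    (hadj : ∀ i : ℕ, i + 1 < m → ∃ n, y n = i + 2)
    (wstar : W) (bstar : Fin m → ℝ)
    (hmin : ∀ (w : W) (b : Fin m → ℝ),
      coralLoss N m g lam y wstar bstar ≤ coralLoss N m g lam y w b) :
    Antitone bstar := by
  classical
  -- per-task loss as a function of the bias
  set φ : Fin m → ℝ → ℝ := fun k c => -∑ n, ((if (k : ℕ) + 1 < y n then (1 : ℝ) else 0) *
      Real.log (sigmoid (g wstar n + c)) +
      (1 - (if (k : ℕ) + 1 < y n then (1 : ℝ) else 0)) *
      Real.log (1 - sigmoid (g wstar n + c))) with hφ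
  have hL : ∀ b : Fin m → ℝ, coralLoss N m g lam y wstar b = ∑ k, lam k * φ k (b k) := by
    intro b
    unfold coralLoss
    rw [Finset.sum_comm]
    rw [← Finset.sum_neg_distrib]
    refine Finset.sum_congr rfl ?_
    intro k _
    rw [hφ]
    simp [Finset.mul_sum]
  -- each bias coordinate minimizes its own φ
  have key : ∀ (k : Fin m) (c : ℝ), φ k (bstar k) ≤ φ k c := by
    intro k c
    have h := hmin wstar (Function.update bstar k c)
    rw [hL, hL] at h
    have hrw : ∀ k' : Fin m, lam k' * φ k' (Function.update bstar k c k')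
        = Function.update (fun k' => lam k' * φ k' (bstar k')) k (lam k * φ k c) k' := by
      intro k'
      rcases eq_or_ne k' k with rfl | hne
      · simp
      · simp [Function.update_of_ne hne]
    rw [Finset.sum_congr rfl (fun k' _ => hrw k')] at h
    rw [Finset.sum_update_of_mem (Finset.mem_univ k)] at h
    rw [← Finset.sum_erase_add _ _ (Finset.mem_univ k), Finset.erase_eq] at h
    have h2 : lam k * φ k (bstar k) ≤ lam k * φ k c := by linarith
    exact le_of_mul_le_mul_left h2 (hlam k)
  -- difference of adjacent φ's
  have hdiff : ∀ (k k' : Fin m), (k' : ℕ) = (k : ℕ) + 1 → ∀ c : ℝ,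
      φ k' c = φ k c + ∑ n, (if y n = (k : ℕ) + 2 then g wstar n + c else 0) := by
    intro k k' hkk c
    rw [hφ]
    simp only
    rw [← Finset.sum_neg_distrib, ← Finset.sum_neg_distrib, ← Finset.sum_add_distrib]
    refine Finset.sum_congr rfl ?_
    intro n _
    rw [hkk]
    rcases lt_trichotomy (y n) ((k : ℕ) + 2) with hlt | heq | hgt
    · have h1 : ¬ ((k : ℕ) + 1 + 1 < y n) := by omega
      have h2 : ¬ ((k : ℕ) + 1 < y n) := by omega
      have h3 : y n ≠ (k : ℕ) + 2 := by omega
      simp [h1, h2, h3]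
    · have h1 : ¬ ((k : ℕ) + 1 + 1 < y n) := by omega
      have h2 : (k : ℕ) + 1 < y n := by omega
      rw [if_neg h1, if_pos h2, if_pos heq, log_one_sub_sigmoid (g wstar n + c)]
      ring
    · have h1 : (k : ℕ) + 1 + 1 < y n := hgt
      have h2 : (k : ℕ) + 1 < y n := by omega
      have h3 : y n ≠ (k : ℕ) + 2 := by omega
      simp [h1, h2, h3]
  -- adjacent ordering
  have adj : ∀ (k k' : Fin m), (k' : ℕ) = (k : ℕ) + 1 → bstar k' ≤ bstar k := by
    intro k k' hkk
    by_contra hcon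
    push_neg at hcon
    obtain ⟨n₀, hn₀⟩ := hadj k (by omega)
    have h1 : φ k (bstar k) ≤ φ k (bstar k') := key k (bstar k')
    have h2 : φ k' (bstar k') ≤ φ k' (bstar k) := key k' (bstar k)
    rw [hdiff k k' hkk (bstar k'), hdiff k k' hkk (bstar k)] at h2
    have hsum : (0 : ℝ) < ∑ n, ((if y n = (k : ℕ) + 2 then g wstar n + bstar k' else 0)
        - (if y n = (k : ℕ) + 2 then g wstar n + bstar k else 0)) := by
      apply Finset.sum_pos'
      · intro n _
        by_cases h : y n = (k : ℕ) + 2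
        · simp only [if_pos h]; linarith
        · simp [h]
      · refine ⟨n₀, Finset.mem_univ n₀, ?_⟩
        simp only [if_pos hn₀]
        linarith
    rw [Finset.sum_sub_distrib] at hsum
    linarith
  -- conclude antitone from adjacent steps
  have step : ∀ (d : ℕ) (i j : Fin m), (j : ℕ) = (i : ℕ) + d → bstar j ≤ bstar i := by
    intro d
    induction d with
    | zero =>
      intro i j h
      have : j = i := Fin.ext (by omega)
      rw [this]
    | succ d ih =>
      intro i j h
      have hdm : (i : ℕ) + d < m := by have := j.isLt; omega
      have h1 : bstar j ≤ bstar ⟨(i : ℕ) + d, hdm⟩ := adj ⟨(i : ℕ) + d, hdm⟩ j (by simp; omega)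
      exact le_trans h1 (ih i ⟨(i : ℕ) + d, hdm⟩ rfl)
  intro i j hij
  have hij' : (i : ℕ) ≤ (j : ℕ) := hij
  obtain ⟨d, hd⟩ := Nat.exists_eq_add_of_le hij'
  exact step d i j hd
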